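/- Let Σℓ ∈ ℝ^{ℓ×ℓ} be symmetric positive definite, Σh ∈ ℝ^{h×h} symmetric, and B, V ∈ ℝ^{ℓ×h} fixed matrices. Define, for S ∈ ℝ^{ℓ×h}, A(S) = B⊙S⊙V and f(S) = Tr((A(S)ᵀΣℓA(S))⁻¹ Σh) + log det(A(S)ᵀΣℓA(S)). Let S be such that A = A(S) satisfies that AᵀΣℓA is positive definite, and set Ã = (AᵀΣℓA)⁻¹. Then f has Fréchet derivative at S given by H ↦ Tr(Gᵀ H) with gradient G = 2 (B⊙V) ⊙ ((Σℓ A Ã)(I_h − Σh Ã)). -/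

import Mathlib

open Matrix

attribute [local instance] Matrix.normedAddCommGroup Matrix.normedSpace

/-- The continuous linear map `H ↦ Tr(Gᵀ H)` on `ℓ×h` real matrices. -/
noncomputable def traceCLM {ℓ h : ℕ} (G : Matrix (Fin ℓ) (Fin h) ℝ) :
    Matrix (Fin ℓ) (Fin h) ℝ →L[ℝ] ℝ :=
  LinearMap.toContinuousLinearMap
    { toFun := fun H => (Gᵀ * H).trace
      map_add' := fun X Y => by simp [Matrix.mul_add]
      map_smul' := fun c X => by simp [Matrix.mul_smul] }

section Aux

open Asymptotics Filter Topology

/-- Continuous linear maps with the normed-space instances. -/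
abbrev NCLM (E F : Type*) [NormedAddCommGroup E] [NormedSpace ℝ E] [NormedAddCommGroup F]
    [NormedSpace ℝ F] : Type _ := E →L[ℝ] F

@[simp] lemma traceCLM_apply {ℓ h : ℕ} (G H : Matrix (Fin ℓ) (Fin h) ℝ) :
    traceCLM G H = (Gᵀ * H).trace := rfl

/-- Matrix multiplication as a continuous bilinear map. -/
noncomputable def mulCLM (a b c : ℕ) :
    NCLM (Matrix (Fin a) (Fin b) ℝ) (NCLM (Matrix (Fin b) (Fin c) ℝ) (Matrix (Fin a) (Fin c) ℝ)) :=
  LinearMap.toContinuousLinearMap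
    { toFun := fun X => LinearMap.toContinuousLinearMap
        { toFun := fun Y => X * Y
          map_add' := fun Y Z => Matrix.mul_add X Y Z
          map_smul' := fun r Y => (Matrix.mul_smul X r Y) }
      map_add' := fun X Y => by ext Z i j; simp [Matrix.add_mul]
      map_smul' := fun r X => by ext Z i j; simp [Matrix.smul_mul] }

@[simp] lemma mulCLM_apply {a b c : ℕ} (X : Matrix (Fin a) (Fin b) ℝ)
    (Y : Matrix (Fin b) (Fin c) ℝ) : mulCLM a b c X Y = X * Y := rfl

lemma norm_matmul_le {a b c : ℕ} (X : Matrix (Fin a) (Fin b) ℝ) (Y : Matrix (Fin b) (Fin c) ℝ) :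
    ‖X * Y‖ ≤ ‖mulCLM a b c‖ * ‖X‖ * ‖Y‖ := by
  calc ‖X * Y‖ = ‖mulCLM a b c X Y‖ := rfl
    _ ≤ ‖mulCLM a b c X‖ * ‖Y‖ := (mulCLM a b c X).le_opNorm Y
    _ ≤ ‖mulCLM a b c‖ * ‖X‖ * ‖Y‖ := by
        gcongr; exact (mulCLM a b c).le_opNorm X

lemma HasFDerivAt.matmul {a b c : ℕ} {E : Type*} [NormedAddCommGroup E] [NormedSpace ℝ E]
    {f : E → Matrix (Fin a) (Fin b) ℝ} {g : E → Matrix (Fin b) (Fin c) ℝ}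
    {f' : NCLM E (Matrix (Fin a) (Fin b) ℝ)} {g' : NCLM E (Matrix (Fin b) (Fin c) ℝ)} {x : E}
    (hf : HasFDerivAt f f' x) (hg : HasFDerivAt g g' x) :
    HasFDerivAt (fun t => f t * g t)
      (((mulCLM a b c).flip (g x)).comp f' + ((mulCLM a b c) (f x)).comp g') x := by
  have hb := ((mulCLM a b c).isBoundedBilinearMap).hasFDerivAt (f x, g x)
  have := hb.comp x (hf.prodMk hg)
  refine this.congr_fderiv ?_
  refine ContinuousLinearMap.ext fun H => ?_
  show f x * g' H + f' H * g x = f' H * g x + f x * g' H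
  exact add_comm _ _

/-- Fréchet derivative of matrix inversion at an invertible matrix. -/
lemma hasFDerivAt_matrix_inv {n : ℕ} (M₀ : Matrix (Fin n) (Fin n) ℝ) (h : IsUnit M₀.det) :
    HasFDerivAt (fun M : Matrix (Fin n) (Fin n) ℝ => M⁻¹)
      (-(((mulCLM n n n).flip M₀⁻¹).comp ((mulCLM n n n) M₀⁻¹))) M₀ := by
  have hC : (0:ℝ) ≤ ‖mulCLM n n n‖ := ContinuousLinearMap.opNorm_nonneg _
  set C := ‖mulCLM n n n‖ with hCdef
  have hinv : ContinuousAt (fun M : Matrix (Fin n) (Fin n) ℝ => M⁻¹) M₀ := by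
    apply continuousAt_matrix_inv
    have : ContinuousAt (Ring.inverse : ℝ → ℝ) M₀.det := by
      rw [Ring.inverse_eq_inv']
      exact continuousAt_inv₀ (by simpa [isUnit_iff_ne_zero] using h)
    exact this
  rw [hasFDerivAt_iff_isLittleO_nhds_zero]
  rw [isLittleO_iff]
  intro c hc
  set K := C * C * ‖M₀⁻¹‖ with hK
  have hK0 : 0 ≤ K := mul_nonneg (mul_nonneg hC hC) (norm_nonneg _)
  have hε : 0 < c / (K + 1) := div_pos hc (by linarith)
  have htendsto : Tendsto (fun H : Matrix (Fin n) (Fin n) ℝ => M₀⁻¹ - (M₀ + H)⁻¹) (𝓝 0) (𝓝 0) := by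
    have h1 : Tendsto (fun H : Matrix (Fin n) (Fin n) ℝ => M₀ + H) (𝓝 0) (𝓝 M₀) := by
      exact (continuous_const.add continuous_id).tendsto' _ _ (by simp)
    have h2 := hinv.tendsto.comp h1
    have := (tendsto_const_nhds (x := M₀⁻¹)).sub h2
    simpa using this
  have ev1 : ∀ᶠ H : Matrix (Fin n) (Fin n) ℝ in 𝓝 0, ‖M₀⁻¹ - (M₀ + H)⁻¹‖ < c / (K + 1) := by
    have := htendsto.eventually (Metric.ball_mem_nhds (0 : Matrix (Fin n) (Fin n) ℝ) hε)
    filter_upwards [this] with H hH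
    simpa [mem_ball_zero_iff] using hH
  have ev2 : ∀ᶠ H : Matrix (Fin n) (Fin n) ℝ in 𝓝 0, (M₀ + H).det ≠ 0 := by
    have h1 : Tendsto (fun H : Matrix (Fin n) (Fin n) ℝ => (M₀ + H).det) (𝓝 0) (𝓝 M₀.det) := by
      have h2 : Tendsto (fun H : Matrix (Fin n) (Fin n) ℝ => M₀ + H) (𝓝 0) (𝓝 M₀) := by
        exact (continuous_const.add continuous_id).tendsto' _ _ (by simp)
      exact ((continuous_id.matrix_det).continuousAt.tendsto).comp h2
    exact h1.eventually_ne (by simpa [isUnit_iff_ne_zero] using h)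
  filter_upwards [ev1, ev2] with H h1 h2
  have hM : IsUnit (M₀ + H).det := isUnit_iff_ne_zero.2 h2
  have hM1 : (M₀ + H)⁻¹ * (M₀ + H) = 1 := Matrix.nonsing_inv_mul _ hM
  have hM2 : M₀ * M₀⁻¹ = 1 := Matrix.mul_nonsing_inv _ h
  have key : (M₀ + H)⁻¹ * H * M₀⁻¹ = M₀⁻¹ - (M₀ + H)⁻¹ := by
    have e1 : (M₀ + H)⁻¹ * H = 1 - (M₀ + H)⁻¹ * M₀ := by
      have := hM1
      rw [Matrix.mul_add] at this
      exact eq_sub_of_add_eq' this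
    rw [e1, Matrix.sub_mul, Matrix.one_mul, Matrix.mul_assoc, hM2, Matrix.mul_one]
  have happ : (-(((mulCLM n n n).flip M₀⁻¹).comp ((mulCLM n n n) M₀⁻¹))) H
      = -(M₀⁻¹ * H * M₀⁻¹) := by
    simp [Matrix.mul_assoc]
  have eident : (M₀ + H)⁻¹ - M₀⁻¹ - (-(M₀⁻¹ * H * M₀⁻¹))
      = (M₀⁻¹ - (M₀ + H)⁻¹) * H * M₀⁻¹ := by
    rw [Matrix.sub_mul, Matrix.sub_mul, key]
    abel
  rw [happ, eident]
  calc ‖(M₀⁻¹ - (M₀ + H)⁻¹) * H * M₀⁻¹‖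
      ≤ C * ‖(M₀⁻¹ - (M₀ + H)⁻¹) * H‖ * ‖M₀⁻¹‖ := norm_matmul_le _ _
    _ ≤ C * (C * ‖M₀⁻¹ - (M₀ + H)⁻¹‖ * ‖H‖) * ‖M₀⁻¹‖ := by
        gcongr
        exact norm_matmul_le _ _
    _ = K * ‖M₀⁻¹ - (M₀ + H)⁻¹‖ * ‖H‖ := by rw [hK]; ring
    _ ≤ K * (c / (K + 1)) * ‖H‖ :=
        mul_le_mul_of_nonneg_right
          (mul_le_mul_of_nonneg_left (le_of_lt h1) hK0) (norm_nonneg _)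
    _ ≤ c * ‖H‖ := by
        have h3 : K * (c / (K + 1)) ≤ (K + 1) * (c / (K + 1)) :=
          mul_le_mul_of_nonneg_right (by linarith) hε.le
        have h4 : (K + 1) * (c / (K + 1)) = c := by
          rw [mul_comm]
          exact div_mul_cancel₀ c (by linarith)
        have : K * (c / (K + 1)) ≤ c := by linarith
        exact mul_le_mul_of_nonneg_right this (norm_nonneg _)

/-- The determinant as a continuous multilinear map in the rows. -/
noncomputable def detCM (n : ℕ) : ContinuousMultilinearMap ℝ (fun _ : Fin n => (Fin n → ℝ)) ℝ :=
  MultilinearMap.mkContinuous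
    (Matrix.detRowAlternating (n := Fin n) (R := ℝ)).toMultilinearMap
    ((Nat.factorial n : ℕ) : ℝ) (by
      intro m
      have hm : (Matrix.detRowAlternating (n := Fin n) (R := ℝ)).toMultilinearMap m
          = (Matrix.of m).det := rfl
      rw [hm, Matrix.det_apply]
      calc ‖∑ σ : Equiv.Perm (Fin n), Equiv.Perm.sign σ • ∏ i, Matrix.of m (σ i) i‖
          ≤ ∑ σ : Equiv.Perm (Fin n), ‖Equiv.Perm.sign σ • ∏ i, Matrix.of m (σ i) i‖ :=
            norm_sum_le _ _
        _ ≤ ∑ σ : Equiv.Perm (Fin n), ∏ i, ‖m i‖ := by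
            apply Finset.sum_le_sum
            intro σ _
            have h1 : ‖Equiv.Perm.sign σ • ∏ i, Matrix.of m (σ i) i‖
                = ‖∏ i, m (σ i) i‖ := by
              rcases Int.units_eq_one_or (Equiv.Perm.sign σ) with h | h <;>
                simp [h, Units.smul_def, Matrix.of_apply]
            rw [h1, Real.norm_eq_abs, Finset.abs_prod]
            have h2 : ∀ i ∈ Finset.univ, |m (σ i) i| ≤ ‖m (σ i)‖ := by
              intro i _
              simpa [Real.norm_eq_abs] using norm_le_pi_norm (m (σ i)) i
            calc ∏ i, |m (σ i) i| ≤ ∏ i, ‖m (σ i)‖ :=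
                  Finset.prod_le_prod (fun i _ => abs_nonneg _) h2
              _ = ∏ i, ‖m i‖ := Equiv.prod_comp σ fun i => ‖m i‖
        _ = ((Nat.factorial n : ℕ) : ℝ) * ∏ i, ‖m i‖ := by
            rw [Finset.sum_const, Finset.card_univ, Fintype.card_perm, Fintype.card_fin,
              nsmul_eq_mul])

@[simp] lemma detCM_apply {n : ℕ} (m : Fin n → Fin n → ℝ) : detCM n m = (Matrix.of m).det := rfl

lemma hasFDerivAt_det {n : ℕ} (M₀ : Matrix (Fin n) (Fin n) ℝ) :
    HasFDerivAt (fun M : Matrix (Fin n) (Fin n) ℝ => M.det) ((detCM n).linearDeriv M₀) M₀ := by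
  have := (detCM n).hasFDerivAt M₀
  exact this.congr_of_eventuallyEq (Filter.Eventually.of_forall fun M => (detCM_apply M))

lemma linearDeriv_det_apply {n : ℕ} (M₀ H : Matrix (Fin n) (Fin n) ℝ) :
    (detCM n).linearDeriv M₀ H = ((M₀.adjugate * H)).trace := by
  erw [ContinuousMultilinearMap.linearDeriv_apply]
  have key : ∀ i : Fin n, detCM n (Function.update M₀ i (H i))
      = ∑ j : Fin n, H i j * M₀.adjugate j i := by
    intro i
    have hu : H i = ∑ j : Fin n, H i j • (Pi.single j (1:ℝ) : Fin n → ℝ) := by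
      ext j; simp [Pi.single_apply]
    have h0 : detCM n (Function.update M₀ i (H i))
        = ((detCM n).toMultilinearMap.toLinearMap M₀ i) (H i) := rfl
    rw [h0]
    conv_lhs => rw [hu]
    rw [map_sum]
    refine Finset.sum_congr rfl fun j _ => ?_
    rw [LinearMap.map_smul]
    have h2 : ((detCM n).toMultilinearMap.toLinearMap M₀ i) (Pi.single j (1:ℝ))
        = (M₀.updateRow i (Pi.single j 1)).det := rfl
    rw [h2, ← Matrix.adjugate_apply, smul_eq_mul]
  rw [Finset.sum_congr rfl (fun i _ => key i)]
  rw [Matrix.trace]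
  rw [Finset.sum_comm]
  congr 1
  ext j
  simp [Matrix.diag, Matrix.mul_apply, mul_comm]


noncomputable def adjTraceCLM {n : ℕ} (M₀ : Matrix (Fin n) (Fin n) ℝ) :
    NCLM (Matrix (Fin n) (Fin n) ℝ) ℝ :=
  LinearMap.toContinuousLinearMap
    { toFun := fun X => (M₀.adjugate * X).trace
      map_add' := fun X Y => by simp [Matrix.mul_add]
      map_smul' := fun r X => by simp [Matrix.mul_smul] }

@[simp] lemma adjTraceCLM_apply {n : ℕ} (M₀ X : Matrix (Fin n) (Fin n) ℝ) :
    adjTraceCLM M₀ X = (M₀.adjugate * X).trace := rfl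

lemma hasFDerivAt_det' {n : ℕ} (M₀ : Matrix (Fin n) (Fin n) ℝ) :
    HasFDerivAt (fun M : Matrix (Fin n) (Fin n) ℝ => M.det) (adjTraceCLM M₀) M₀ := by
  have h1 := hasFDerivAt_det M₀
  have h2 : (detCM n).linearDeriv M₀ = adjTraceCLM M₀ := by
    refine ContinuousLinearMap.ext fun H => ?_
    erw [linearDeriv_det_apply]
    rfl
  rwa [h2] at h1


lemma trace_mul_hadamard {ℓ h : ℕ} (P : Matrix (Fin h) (Fin ℓ) ℝ)
    (B H V : Matrix (Fin ℓ) (Fin h) ℝ) :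
    (P * (B ⊙ H ⊙ V)).trace = (((B ⊙ V) ⊙ Pᵀ)ᵀ * H).trace := by
  simp only [Matrix.trace, Matrix.diag_apply, Matrix.mul_apply, Matrix.hadamard,
    Matrix.transpose_apply, Matrix.of_apply]
  exact Finset.sum_congr rfl fun j _ => Finset.sum_congr rfl fun i _ => by ring

noncomputable def hadCLM {ℓ h : ℕ} (B V : Matrix (Fin ℓ) (Fin h) ℝ) :
    NCLM (Matrix (Fin ℓ) (Fin h) ℝ) (Matrix (Fin ℓ) (Fin h) ℝ) :=
  LinearMap.toContinuousLinearMap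
    { toFun := fun T => B ⊙ T ⊙ V
      map_add' := fun X Y => by ext i j; simp [Matrix.hadamard]; ring
      map_smul' := fun r X => by ext i j; simp [Matrix.hadamard]; ring }

@[simp] lemma hadCLM_apply {ℓ h : ℕ} (B V T : Matrix (Fin ℓ) (Fin h) ℝ) :
    hadCLM B V T = B ⊙ T ⊙ V := rfl

noncomputable def transCLM (a b : ℕ) :
    NCLM (Matrix (Fin a) (Fin b) ℝ) (Matrix (Fin b) (Fin a) ℝ) :=
  LinearMap.toContinuousLinearMap
    { toFun := fun X => Xᵀ
      map_add' := fun X Y => Matrix.transpose_add X Y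
      map_smul' := fun r X => Matrix.transpose_smul r X }

@[simp] lemma transCLM_apply {a b : ℕ} (X : Matrix (Fin a) (Fin b) ℝ) :
    transCLM a b X = Xᵀ := rfl

noncomputable def trMulCLM {h : ℕ} (Sh : Matrix (Fin h) (Fin h) ℝ) :
    NCLM (Matrix (Fin h) (Fin h) ℝ) ℝ :=
  LinearMap.toContinuousLinearMap
    { toFun := fun X => (X * Sh).trace
      map_add' := fun X Y => by simp [Matrix.add_mul]
      map_smul' := fun r X => by simp [Matrix.smul_mul] }

@[simp] lemma trMulCLM_apply {h : ℕ} (Sh X : Matrix (Fin h) (Fin h) ℝ) :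
    trMulCLM Sh X = (X * Sh).trace := rfl

end Aux

/-- Partial derivative w.r.t. `S` of the partial-prior objective
`f(S) = Tr((A(S)ᵀΣℓA(S))⁻¹ Σh) + log det(A(S)ᵀΣℓA(S))`, `A(S) = B⊙S⊙V`:
the Euclidean gradient at `S` is `2 (B⊙V) ⊙ ((Σℓ A Ã)(I_h − Σh Ã))`,
with `A = B⊙S⊙V` and `Ã = (AᵀΣℓA)⁻¹`. -/
theorem stmt_7 {ℓ h : ℕ}
    (Sl : Matrix (Fin ℓ) (Fin ℓ) ℝ) (hSl : Sl.PosDef)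
    (Sh : Matrix (Fin h) (Fin h) ℝ) (hSh : Sh.IsSymm)
    (B V S : Matrix (Fin ℓ) (Fin h) ℝ)
    (hpd : ((B ⊙ S ⊙ V)ᵀ * Sl * (B ⊙ S ⊙ V)).PosDef) :
    HasFDerivAt
      (fun T : Matrix (Fin ℓ) (Fin h) ℝ =>
        (((B ⊙ T ⊙ V)ᵀ * Sl * (B ⊙ T ⊙ V))⁻¹ * Sh).trace +
          Real.log ((B ⊙ T ⊙ V)ᵀ * Sl * (B ⊙ T ⊙ V)).det)
      (traceCLM ((2 : ℝ) •
        ((B ⊙ V) ⊙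
          ((Sl * (B ⊙ S ⊙ V) * ((B ⊙ S ⊙ V)ᵀ * Sl * (B ⊙ S ⊙ V))⁻¹) *
            (1 - Sh * ((B ⊙ S ⊙ V)ᵀ * Sl * (B ⊙ S ⊙ V))⁻¹)))))
      S := by
  classical
  have hU : IsUnit ((B ⊙ S ⊙ V)ᵀ * Sl * (B ⊙ S ⊙ V)).det :=
    isUnit_iff_ne_zero.2 (ne_of_gt hpd.det_pos)
  have hA : HasFDerivAt (fun T => B ⊙ T ⊙ V) (hadCLM B V) S := (hadCLM B V).hasFDerivAt
  have hAT : HasFDerivAt (fun T : Matrix (Fin ℓ) (Fin h) ℝ => (B ⊙ T ⊙ V)ᵀ)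
      ((transCLM ℓ h).comp (hadCLM B V)) S := (transCLM ℓ h).hasFDerivAt.comp S hA
  have hM := (hAT.matmul (hasFDerivAt_const Sl S)).matmul hA
  have hMinv := (hasFDerivAt_matrix_inv ((B ⊙ S ⊙ V)ᵀ * Sl * (B ⊙ S ⊙ V)) hU).comp S hM
  have htr := (trMulCLM Sh).hasFDerivAt.comp S hMinv
  have hd := (hasFDerivAt_det' ((B ⊙ S ⊙ V)ᵀ * Sl * (B ⊙ S ⊙ V))).comp S hM
  have hlog := (Real.hasDerivAt_log (ne_of_gt hpd.det_pos)).comp_hasFDerivAt S hd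
  have hsum := htr.add hlog
  refine hsum.congr_fderiv (Eq.symm ?_)
  ext H
  show (((2 : ℝ) • ((B ⊙ V) ⊙
      ((Sl * (B ⊙ S ⊙ V) * ((B ⊙ S ⊙ V)ᵀ * Sl * (B ⊙ S ⊙ V))⁻¹) *
        (1 - Sh * ((B ⊙ S ⊙ V)ᵀ * Sl * (B ⊙ S ⊙ V))⁻¹))))ᵀ * H).trace =
    ((-(((B ⊙ S ⊙ V)ᵀ * Sl * (B ⊙ S ⊙ V))⁻¹ *
      (((B ⊙ H ⊙ V)ᵀ * Sl + (B ⊙ S ⊙ V)ᵀ * (0 : Matrix (Fin ℓ) (Fin ℓ) ℝ)) * (B ⊙ S ⊙ V) +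
        ((B ⊙ S ⊙ V)ᵀ * Sl) * (B ⊙ H ⊙ V)) *
      ((B ⊙ S ⊙ V)ᵀ * Sl * (B ⊙ S ⊙ V))⁻¹)) * Sh).trace +
    ((B ⊙ S ⊙ V)ᵀ * Sl * (B ⊙ S ⊙ V)).det⁻¹ *
      (((B ⊙ S ⊙ V)ᵀ * Sl * (B ⊙ S ⊙ V)).adjugate *
        (((B ⊙ H ⊙ V)ᵀ * Sl + (B ⊙ S ⊙ V)ᵀ * (0 : Matrix (Fin ℓ) (Fin ℓ) ℝ)) * (B ⊙ S ⊙ V) +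
          ((B ⊙ S ⊙ V)ᵀ * Sl) * (B ⊙ H ⊙ V))).trace
  simp only [Matrix.mul_zero, add_zero]
  set A := B ⊙ S ⊙ V with hA
  set M := Aᵀ * Sl * A with hMdef
  set W := M⁻¹ with hWdef
  have hSlT : Slᵀ = Sl := by
    have := hSl.isHermitian
    rwa [Matrix.IsHermitian, conjTranspose] at this
  have hShT : Shᵀ = Sh := hSh
  have hMT : Mᵀ = M := by
    rw [hMdef, Matrix.transpose_mul, Matrix.transpose_mul, Matrix.transpose_transpose, hSlT,
      ← Matrix.mul_assoc]
  have hWT : Wᵀ = W := by rw [hWdef, Matrix.transpose_nonsing_inv, hMT]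
  have hX1T : ((B ⊙ H ⊙ V)ᵀ * Sl * A)ᵀ = Aᵀ * Sl * (B ⊙ H ⊙ V) := by
    rw [Matrix.transpose_mul, Matrix.transpose_mul, Matrix.transpose_transpose, hSlT,
      ← Matrix.mul_assoc]
  have key1 : ∀ Y : Matrix (Fin h) (Fin h) ℝ, Yᵀ = Y →
      (Y * ((B ⊙ H ⊙ V)ᵀ * Sl * A)).trace = (Y * (Aᵀ * Sl * (B ⊙ H ⊙ V))).trace := by
    intro Y hY
    calc (Y * ((B ⊙ H ⊙ V)ᵀ * Sl * A)).trace
        = ((Y * ((B ⊙ H ⊙ V)ᵀ * Sl * A))ᵀ).trace := (Matrix.trace_transpose _).symm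
      _ = (((B ⊙ H ⊙ V)ᵀ * Sl * A)ᵀ * Yᵀ).trace := by rw [Matrix.transpose_mul]
      _ = ((Aᵀ * Sl * (B ⊙ H ⊙ V)) * Y).trace := by rw [hX1T, hY]
      _ = (Y * (Aᵀ * Sl * (B ⊙ H ⊙ V))).trace := Matrix.trace_mul_comm _ _
  have hadjtr : ∀ Y : Matrix (Fin h) (Fin h) ℝ,
      M.det⁻¹ * (M.adjugate * Y).trace = (W * Y).trace := by
    intro Y
    rw [hWdef, Matrix.inv_def, Ring.inverse_eq_inv', Matrix.smul_mul, Matrix.trace_smul,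
      smul_eq_mul]
  rw [hadjtr]
  have e1 : (W * ((B ⊙ H ⊙ V)ᵀ * Sl * A + Aᵀ * Sl * (B ⊙ H ⊙ V))).trace
      = 2 * (W * (Aᵀ * Sl * (B ⊙ H ⊙ V))).trace := by
    rw [Matrix.mul_add, Matrix.trace_add, key1 W hWT]; ring
  have hY2T : (W * Sh * W)ᵀ = W * Sh * W := by
    rw [Matrix.transpose_mul, Matrix.transpose_mul, hWT, hShT, ← Matrix.mul_assoc]
  have e2 : ((-(W * ((B ⊙ H ⊙ V)ᵀ * Sl * A + Aᵀ * Sl * (B ⊙ H ⊙ V)) * W)) * Sh).trace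
      = -(2 * ((W * Sh * W) * (Aᵀ * Sl * (B ⊙ H ⊙ V))).trace) := by
    rw [Matrix.neg_mul, Matrix.trace_neg]
    have s1 : (W * ((B ⊙ H ⊙ V)ᵀ * Sl * A + Aᵀ * Sl * (B ⊙ H ⊙ V)) * W) * Sh
        = (W * ((B ⊙ H ⊙ V)ᵀ * Sl * A + Aᵀ * Sl * (B ⊙ H ⊙ V))) * (W * Sh) := by
      rw [Matrix.mul_assoc]
    have s2 : (W * Sh) * (W * ((B ⊙ H ⊙ V)ᵀ * Sl * A + Aᵀ * Sl * (B ⊙ H ⊙ V)))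
        = (W * Sh * W) * ((B ⊙ H ⊙ V)ᵀ * Sl * A + Aᵀ * Sl * (B ⊙ H ⊙ V)) := by
      rw [← Matrix.mul_assoc]
    rw [s1, Matrix.trace_mul_comm, s2, Matrix.mul_add, Matrix.trace_add,
      key1 (W * Sh * W) hY2T]
    ring
  rw [e1, e2]
  have e3 : -(2 * ((W * Sh * W) * (Aᵀ * Sl * (B ⊙ H ⊙ V))).trace)
        + 2 * (W * (Aᵀ * Sl * (B ⊙ H ⊙ V))).trace
      = 2 * (((W - W * Sh * W) * (Aᵀ * Sl)) * (B ⊙ H ⊙ V)).trace := by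
    rw [Matrix.sub_mul, Matrix.sub_mul, Matrix.trace_sub]
    simp only [← Matrix.mul_assoc]
    ring
  rw [e3, trace_mul_hadamard ((W - W * Sh * W) * (Aᵀ * Sl)) B H V]
  have hQT : ((W - W * Sh * W) * (Aᵀ * Sl))ᵀ = Sl * A * W * (1 - Sh * W) := by
    rw [Matrix.transpose_mul, Matrix.transpose_mul, Matrix.transpose_transpose,
      Matrix.transpose_sub, hY2T, hWT, hSlT]
    simp only [Matrix.mul_sub, Matrix.sub_mul, Matrix.mul_one, ← Matrix.mul_assoc]
  rw [hQT, Matrix.transpose_smul, Matrix.smul_mul, Matrix.trace_smul]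
  rw [smul_eq_mul]
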